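/- Let L ≥ 1 and m ≥ 1 be natural numbers and q, q₁, …, q_m ∈ [L]³. Then the subgraph of the grid graph induced on the set Λ(q) ∩ (Λ(q₁) ∪ ⋯ ∪ Λ(q_m)) is nonempty and connected. -/

import Mathlib

/-- Two points of the grid `[L]^D` are adjacent in the grid graph iff they agree
in all but exactly one coordinate, where they differ by exactly 1. -/
def gridAdj {L D : ℕ} (u v : Fin D → Fin L) : Prop :=
  ∃ i : Fin D, (∀ j : Fin D, j ≠ i → u j = v j) ∧
    ((u i : ℕ) + 1 = (v i : ℕ) ∨ (v i : ℕ) + 1 = (u i : ℕ))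

/-- The grid graph on `[L]^D`. -/
def gridGraph (L D : ℕ) : SimpleGraph (Fin D → Fin L) where
  Adj := gridAdj
  symm := by
    constructor
    rintro u v ⟨i, h1, h2⟩
    exact ⟨i, fun j hj => (h1 j hj).symm, h2.symm⟩
  loopless := by
    constructor
    rintro u ⟨i, h1, h2⟩
    rcases h2 with h | h <;> omega

/-- The star plane `Λ(q)`: points of the grid agreeing with `q` in all but at
most two coordinates. -/
def starPlane {L D : ℕ} (q : Fin D → Fin L) : Set (Fin D → Fin L) :=
  { p | Set.ncard { k : Fin D | p k ≠ q k } ≤ 2 }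

namespace Stmt12Aux

variable {L : ℕ}

lemma star_of_agree {q p : Fin 3 → Fin L} (a : Fin 3) (h : p a = q a) :
    p ∈ starPlane q := by
  have hsub : {k : Fin 3 | p k ≠ q k} ⊆ ({a}ᶜ : Set (Fin 3)) := by
    intro k hk
    simp only [Set.mem_compl_iff, Set.mem_singleton_iff]
    rintro rfl; exact hk h
  have h1 := Set.ncard_le_ncard hsub (Set.toFinite _)
  have h2 : ({a}ᶜ : Set (Fin 3)).ncard = 2 := by
    rw [Set.ncard_eq_toFinset_card']
    simp [Finset.card_compl]
  rw [starPlane, Set.mem_setOf_eq]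
  omega

lemma agree_of_star {q p : Fin 3 → Fin L} (h : p ∈ starPlane q) : ∃ a, p a = q a := by
  by_contra hc
  push_neg at hc
  have heq : {k : Fin 3 | p k ≠ q k} = Set.univ := by
    ext k; simpa using hc k
  rw [starPlane, Set.mem_setOf_eq, heq, Set.ncard_univ] at h
  simp [Nat.card_eq_fintype_card] at h

lemma adj_step (x : Fin 3 → Fin L) (k : Fin 3) {u v : Fin L}
    (h : (u : ℕ) + 1 = v ∨ (v : ℕ) + 1 = u) :
    (gridGraph L 3).Adj (Function.update x k u) (Function.update x k v) := by
  refine ⟨k, fun j hj => ?_, ?_⟩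
  · simp [Function.update_of_ne hj]
  · simpa using h

lemma line_aux (s : Set (Fin 3 → Fin L)) (k : Fin 3) (x : Fin 3 → Fin L)
    (hs : ∀ c : Fin L, Function.update x k c ∈ s) :
    ∀ (n : ℕ) (u v : Fin L), (u : ℕ) + n = v →
      ((gridGraph L 3).induce s).Reachable ⟨_, hs u⟩ ⟨_, hs v⟩ := by
  intro n
  induction n with
  | zero =>
    intro u v h
    have : u = v := Fin.ext (by omega)
    subst this
    exact SimpleGraph.Reachable.refl _
  | succ n ih =>
    intro u v h
    have hlt : (u : ℕ) + 1 < L := by have := v.isLt; omega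
    have step : ((gridGraph L 3).induce s).Adj ⟨_, hs u⟩ ⟨_, hs ⟨(u : ℕ) + 1, hlt⟩⟩ :=
      adj_step x k (Or.inl rfl)
    exact step.reachable.trans (ih ⟨(u : ℕ) + 1, hlt⟩ v (by simpa using by omega))

lemma line (s : Set (Fin 3 → Fin L)) (k : Fin 3) (x : Fin 3 → Fin L)
    (hs : ∀ c : Fin L, Function.update x k c ∈ s) (u v : Fin L) :
    ((gridGraph L 3).induce s).Reachable ⟨_, hs u⟩ ⟨_, hs v⟩ := by
  rcases le_total (u : ℕ) (v : ℕ) with h | h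
  · exact line_aux s k x hs ((v : ℕ) - u) u v (by omega)
  · exact (line_aux s k x hs ((u : ℕ) - v) v u (by omega)).symm

lemma move (s : Set (Fin 3 → Fin L)) (k : Fin 3) {x y : Fin 3 → Fin L}
    (hxy : ∀ j, j ≠ k → x j = y j)
    (hs : ∀ c : Fin L, Function.update x k c ∈ s)
    (hx : x ∈ s) (hy : y ∈ s) :
    ((gridGraph L 3).induce s).Reachable ⟨x, hx⟩ ⟨y, hy⟩ := by
  have e1 : (⟨x, hx⟩ : s) = ⟨Function.update x k (x k), hs (x k)⟩ :=
    Subtype.ext (by simp)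
  have e2 : (⟨y, hy⟩ : s) = ⟨Function.update x k (y k), hs (y k)⟩ := by
    refine Subtype.ext (funext fun j => ?_)
    by_cases h : j = k
    · subst h; simp
    · simp [Function.update_of_ne h, (hxy j h).symm]
  rw [e1, e2]
  exact line s k x hs (x k) (y k)

lemma fin3 (j : Fin 3) : j = 0 ∨ j = 1 ∨ j = 2 := by
  have := j.isLt
  rcases (by omega : (j : ℕ) = 0 ∨ (j : ℕ) = 1 ∨ (j : ℕ) = 2) with h | h | h
  · exact Or.inl (Fin.ext h)
  · exact Or.inr (Or.inl (Fin.ext h))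
  · exact Or.inr (Or.inr (Fin.ext h))

end Stmt12Aux

/-- **Intersection of a star plane with a union of star planes is connected.**
For `q, q₁, …, q_m ∈ [L]³` the subgraph of the grid graph induced on
`Λ(q) ∩ (Λ(q₁) ∪ ⋯ ∪ Λ(q_m))` is nonempty and connected. -/
theorem stmt12 (L m : ℕ) (hL : 1 ≤ L) (hm : 1 ≤ m)
    (q : Fin 3 → Fin L) (qs : Fin m → (Fin 3 → Fin L)) :
    ((gridGraph L 3).induce (starPlane q ∩ ⋃ i : Fin m, starPlane (qs i))).Connected := by
  classical
  set S : Set (Fin 3 → Fin L) := starPlane q ∩ ⋃ i : Fin m, starPlane (qs i) with hS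
  have memS : ∀ (p : Fin 3 → Fin L) (a : Fin 3) (i : Fin m) (b : Fin 3),
      p a = q a → p b = qs i b → p ∈ S := by
    intro p a i b h1 h2
    exact ⟨Stmt12Aux.star_of_agree a h1,
      Set.mem_iUnion.2 ⟨i, Stmt12Aux.star_of_agree b h2⟩⟩
  set G := (gridGraph L 3).induce S with hG
  -- canonical "w"-points
  set w : Fin 3 → Fin m → (Fin 3 → Fin L) :=
    fun a i => Function.update (qs i) a (q a) with hw
  have hwa : ∀ a i, w a i a = q a := by intro a i; simp [hw]
  have hwb : ∀ a i b, b ≠ a → w a i b = qs i b := by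
    intro a i b hb; simp [hw, Function.update_of_ne hb]
  have hwS : ∀ a i, w a i ∈ S := by
    intro a i
    by_cases h : a = 0
    · subst h
      exact memS _ 0 i 1 (hwa 0 i) (hwb 0 i 1 (by decide))
    · exact memS _ a i 0 (hwa a i) (hwb a i 0 (fun hc => h hc.symm))
  have i0 : Fin m := ⟨0, hm⟩
  -- step 1: any p in S reaches w a i given witnesses with a ≠ b
  have reach1 : ∀ (p : Fin 3 → Fin L) (hp : p ∈ S) (a b : Fin 3) (i : Fin m),
      p a = q a → p b = qs i b → a ≠ b →
      G.Reachable ⟨p, hp⟩ ⟨w a i, hwS a i⟩ := by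
    intro p hp a b i h1 h2 hab
    have hv : (a : ℕ) ≠ (b : ℕ) := Fin.val_ne_of_ne hab
    have ha3 := a.isLt; have hb3 := b.isLt
    have hc2lt : 3 - (a : ℕ) - (b : ℕ) < 3 := by omega
    set c2 : Fin 3 := ⟨3 - (a : ℕ) - (b : ℕ), hc2lt⟩ with hc2
    have hac : a ≠ c2 := Fin.ne_of_val_ne (by simp [hc2]; omega)
    have hbc : b ≠ c2 := Fin.ne_of_val_ne (by simp [hc2]; omega)
    refine Stmt12Aux.move S c2 ?_ ?_ hp (hwS a i)
    · intro j hj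
      have hj3 := j.isLt
      have hjv : (j : ℕ) ≠ (c2 : ℕ) := Fin.val_ne_of_ne hj
      have : (j : ℕ) = a ∨ (j : ℕ) = b := by simp [hc2] at hjv; omega
      rcases this with h | h
      · have hj' : j = a := Fin.ext h
        rw [hj', h1, hwa]
      · have hj' : j = b := Fin.ext h
        rw [hj', h2, hwb a i b (Fin.ne_of_val_ne (by omega))]
    · intro c
      exact memS _ a i b (by rw [Function.update_of_ne hac, h1])
        (by rw [Function.update_of_ne hbc, h2])
  -- step 1': any p in S reaches w a i given witnesses (possibly equal)
  have reach1' : ∀ (p : Fin 3 → Fin L) (hp : p ∈ S) (a b : Fin 3) (i : Fin m),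
      p a = q a → p b = qs i b →
      G.Reachable ⟨p, hp⟩ ⟨w a i, hwS a i⟩ := by
    intro p hp a b i h1 h2
    by_cases hab : a = b
    · -- q a = qs i a
      subst hab
      have hq : q a = qs i a := by rw [← h1, h2]
      set b2 : Fin 3 := if a = 0 then 1 else 0 with hb2
      have hab2 : a ≠ b2 := by
        by_cases h : a = 0 <;> simp [hb2, h]
      set p1 : Fin 3 → Fin L := Function.update p b2 (qs i b2) with hp1
      have hmem : ∀ c : Fin L, Function.update p b2 c ∈ S := by
        intro c
        exact memS _ a i a (by rw [Function.update_of_ne hab2, h1])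
          (by rw [Function.update_of_ne hab2, h1, hq])
      have hp1S : p1 ∈ S := hmem _
      have r1 : G.Reachable ⟨p, hp⟩ ⟨p1, hp1S⟩ := by
        refine Stmt12Aux.move S b2 ?_ hmem hp hp1S
        intro j hj
        rw [hp1, Function.update_of_ne hj]
      refine r1.trans (reach1 p1 hp1S a b2 i ?_ ?_ hab2)
      · rw [hp1, Function.update_of_ne hab2, h1]
      · rw [hp1, Function.update_self]
    · exact reach1 p hp a b i h1 h2 hab
  -- step 2: w a i reaches w 0 i
  have reach2 : ∀ (a : Fin 3) (i : Fin m),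
      G.Reachable ⟨w a i, hwS a i⟩ ⟨w 0 i, hwS 0 i⟩ := by
    intro a i
    fin_cases a
    · exact SimpleGraph.Reachable.refl _
    · -- a = 1 : via u = update (w 0 i) 1 (q 1)
      set u : Fin 3 → Fin L := Function.update (w 0 i) 1 (q 1) with hu
      have hmem1 : ∀ c : Fin L, Function.update (w 1 i) 0 c ∈ S := fun c =>
        memS _ 1 i 2 (by rw [Function.update_of_ne (by decide), hwa])
          (by rw [Function.update_of_ne (by decide), hwb 1 i 2 (by decide)])
      have huS : u ∈ S := memS _ 0 i 2
        (by rw [hu, Function.update_of_ne (by decide), hwa])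
        (by rw [hu, Function.update_of_ne (by decide), hwb 0 i 2 (by decide)])
      have r1 : G.Reachable ⟨w 1 i, hwS 1 i⟩ ⟨u, huS⟩ := by
        refine Stmt12Aux.move S 0 ?_ hmem1 (hwS 1 i) huS
        intro j hj
        rcases Stmt12Aux.fin3 j with rfl | rfl | rfl
        · exact absurd rfl hj
        · rw [hwa, hu, Function.update_self]
        · rw [hwb 1 i 2 (by decide), hu, Function.update_of_ne (by decide),
            hwb 0 i 2 (by decide)]
      have hmem2 : ∀ c : Fin L, Function.update u 1 c ∈ S := fun c =>
        memS _ 0 i 2 (by rw [Function.update_of_ne (by decide), hu,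
            Function.update_of_ne (by decide), hwa])
          (by rw [Function.update_of_ne (by decide), hu,
            Function.update_of_ne (by decide), hwb 0 i 2 (by decide)])
      have r2 : G.Reachable ⟨u, huS⟩ ⟨w 0 i, hwS 0 i⟩ := by
        refine Stmt12Aux.move S 1 ?_ hmem2 huS (hwS 0 i)
        intro j hj
        rw [hu, Function.update_of_ne hj]
      exact r1.trans r2
    · -- a = 2 : via u = update (w 0 i) 2 (q 2)
      set u : Fin 3 → Fin L := Function.update (w 0 i) 2 (q 2) with hu
      have hmem1 : ∀ c : Fin L, Function.update (w 2 i) 0 c ∈ S := fun c =>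
        memS _ 2 i 1 (by rw [Function.update_of_ne (by decide), hwa])
          (by rw [Function.update_of_ne (by decide), hwb 2 i 1 (by decide)])
      have huS : u ∈ S := memS _ 0 i 1
        (by rw [hu, Function.update_of_ne (by decide), hwa])
        (by rw [hu, Function.update_of_ne (by decide), hwb 0 i 1 (by decide)])
      have r1 : G.Reachable ⟨w 2 i, hwS 2 i⟩ ⟨u, huS⟩ := by
        refine Stmt12Aux.move S 0 ?_ hmem1 (hwS 2 i) huS
        intro j hj
        rcases Stmt12Aux.fin3 j with rfl | rfl | rfl
        · exact absurd rfl hj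
        · rw [hwb 2 i 1 (by decide), hu, Function.update_of_ne (by decide),
            hwb 0 i 1 (by decide)]
        · rw [hwa, hu, Function.update_self]
      have hmem2 : ∀ c : Fin L, Function.update u 2 c ∈ S := fun c =>
        memS _ 0 i 1 (by rw [Function.update_of_ne (by decide), hu,
            Function.update_of_ne (by decide), hwa])
          (by rw [Function.update_of_ne (by decide), hu,
            Function.update_of_ne (by decide), hwb 0 i 1 (by decide)])
      have r2 : G.Reachable ⟨u, huS⟩ ⟨w 0 i, hwS 0 i⟩ := by
        refine Stmt12Aux.move S 2 ?_ hmem2 huS (hwS 0 i)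
        intro j hj
        rw [hu, Function.update_of_ne hj]
      exact r1.trans r2
  -- step 3: w 0 i reaches w 0 i0
  have reach3 : ∀ i : Fin m,
      G.Reachable ⟨w 0 i, hwS 0 i⟩ ⟨w 0 i0, hwS 0 i0⟩ := by
    intro i
    set u : Fin 3 → Fin L := Function.update (w 0 i) 1 (qs i0 1) with hu
    have hmem1 : ∀ c : Fin L, Function.update (w 0 i) 1 c ∈ S := fun c =>
      memS _ 0 i 2 (by rw [Function.update_of_ne (by decide), hwa])
        (by rw [Function.update_of_ne (by decide), hwb 0 i 2 (by decide)])
    have huS : u ∈ S := hmem1 _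
    have r1 : G.Reachable ⟨w 0 i, hwS 0 i⟩ ⟨u, huS⟩ := by
      refine Stmt12Aux.move S 1 ?_ hmem1 (hwS 0 i) huS
      intro j hj
      rw [hu, Function.update_of_ne hj]
    have hmem2 : ∀ c : Fin L, Function.update u 2 c ∈ S := fun c =>
      memS _ 0 i0 1 (by rw [Function.update_of_ne (by decide), hu,
          Function.update_of_ne (by decide), hwa])
        (by rw [Function.update_of_ne (by decide), hu, Function.update_self])
    have r2 : G.Reachable ⟨u, huS⟩ ⟨w 0 i0, hwS 0 i0⟩ := by
      refine Stmt12Aux.move S 2 ?_ hmem2 huS (hwS 0 i0)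
      intro j hj
      rcases Stmt12Aux.fin3 j with rfl | rfl | rfl
      · rw [hu, Function.update_of_ne (by decide), hwa, hwa]
      · rw [hu, Function.update_self, hwb 0 i0 1 (by decide)]
      · exact absurd rfl hj
    exact r1.trans r2
  -- assemble
  have key : ∀ (p : Fin 3 → Fin L) (hp : p ∈ S),
      G.Reachable ⟨p, hp⟩ ⟨w 0 i0, hwS 0 i0⟩ := by
    intro p hp
    obtain ⟨hp1, hp2⟩ := hp
    obtain ⟨a, ha⟩ := Stmt12Aux.agree_of_star hp1
    obtain ⟨i, hi⟩ := Set.mem_iUnion.1 hp2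
    obtain ⟨b, hb⟩ := Stmt12Aux.agree_of_star hi
    exact ((reach1' p ⟨hp1, hp2⟩ a b i ha hb).trans (reach2 a i)).trans (reach3 i)
  have hne : Nonempty ↥S := ⟨⟨w 0 i0, hwS 0 i0⟩⟩
  exact SimpleGraph.Connected.mk (fun x y => (key x.1 x.2).trans (key y.1 y.2).symm)
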